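/- Let C be a stable category with a t-structure in which products exist and have cohomological amplitude bounded by d (products of connective objects are (-d)-connective). Then for any small family of objects (X_α) and any integer m, the truncation τ_{≤ m} ∏_α X_α is isomorphic to τ_{≤ m} ∏_α τ_{≤ m+d} X_α. -/

import Mathlib

/-! STATEMENT 10: let `C` be a stable (pretriangulated) category with a t-structure
in which products exist and have cohomological amplitude bounded by `d`.  Then for any
small family `(Xₐ)` and any integer `m`, `τ_{≤m} ∏ₐ Xₐ ≅ τ_{≤m} ∏ₐ τ_{≤ m+d} Xₐ`.

We formulate the truncation statement triangulated-internally: identifying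
`τ_{≤ m+d} Xₐ` with any map `uₐ : Xₐ → Yₐ` such that `Yₐ` is `(m+d)`-truncated and the
fiber `Fₐ` of `uₐ` is `(m+d+1)`-connective, the claim that `∏ uₐ` induces an
isomorphism on `τ_{≤ m}` says exactly that the fiber `G` of `∏ uₐ` is
`(m+1)`-connective, i.e. `G ∈ C_{≥ m+1}`. -/

open CategoryTheory CategoryTheory.Limits CategoryTheory.Pretriangulated
  CategoryTheory.Triangulated

theorem stmt_10 {C : Type*} [Category C] [HasZeroObject C] [Preadditive C]
    [HasShift C ℤ] [∀ n : ℤ, (shiftFunctor C n).Additive] [Pretriangulated C]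
    (t : TStructure C) (d : ℕ)
    {ι : Type} -- a small family
    (hprod : ∀ (n : ℤ) (Y : ι → C) [HasProduct Y],
      (∀ a, t.IsGE (Y a) n) → t.IsGE (∏ᶜ Y) (n - d))
    (m : ℤ) (X Y : ι → C) [HasProduct X] [HasProduct Y]
    (u : ∀ a, X a ⟶ Y a)
    (hY : ∀ a, t.IsLE (Y a) (m + d))
    (F : ι → C) (w : ∀ a, F a ⟶ X a) (δ : ∀ a, Y a ⟶ (F a)⟦(1 : ℤ)⟧)
    (hTa : ∀ a, Triangle.mk (w a) (u a) (δ a) ∈ distTriang C)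
    (hF : ∀ a, t.IsGE (F a) (m + d + 1))
    (G : C) (w' : G ⟶ ∏ᶜ X) (δ' : (∏ᶜ Y : _) ⟶ G⟦(1 : ℤ)⟧)
    (hT : Triangle.mk w' (Limits.Pi.map u) δ' ∈ distTriang C) :
    t.IsGE G (m + 1) := by
  classical
  -- construct maps `p a : G ⟶ F a` completing the projections to triangle morphisms
  have hcompl : ∀ a, ∃ (pa : G ⟶ F a), w' ≫ Pi.π X a = pa ≫ w a ∧
      δ' ≫ pa⟦(1 : ℤ)⟧' = Pi.π Y a ≫ δ a := by
    intro a
    obtain ⟨pa, h1, h2⟩ := complete_distinguished_triangle_morphism₁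
      (Triangle.mk w' (Limits.Pi.map u) δ') (Triangle.mk (w a) (u a) (δ a)) hT (hTa a)
      (Pi.π X a) (Pi.π Y a) (Pi.map_π u a)
    exact ⟨pa, h1, h2⟩
  choose p hp1 hp2 using hcompl
  have hz23 : Limits.Pi.map u ≫ δ' = 0 :=
    comp_distTriang_mor_zero₂₃ _ hT
  -- `φ : A ⟶ G` vanishes if all its components vanish
  have key : ∀ {A : C} (φ : A ⟶ G), (∀ a, φ ≫ p a = 0) → φ = 0 := by
    intro A φ hφ
    have h1 : φ ≫ w' = 0 := by
      apply Pi.hom_ext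
      intro a
      rw [Category.assoc, hp1 a, ← Category.assoc, hφ a, zero_comp, zero_comp]
    have hex : ∃ t' : (A⟦(1 : ℤ)⟧ : C) ⟶ ∏ᶜ Y, φ⟦(1 : ℤ)⟧' = t' ≫ δ' :=
      Triangle.coyoneda_exact₁ _ hT (φ⟦(1 : ℤ)⟧')
        (((shiftFunctor C (1 : ℤ)).map_comp _ _).symm.trans
          ((congrArg (shiftFunctor C (1 : ℤ)).map h1).trans (Functor.map_zero _ _ _)))
    obtain ⟨t', ht'⟩ := hex
    have ht'a : ∀ a, (t' ≫ Pi.π Y a) ≫ δ a = 0 := by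
      intro a
      rw [Category.assoc, ← hp2 a, ← Category.assoc, ← ht', ← Functor.map_comp, hφ a,
        Functor.map_zero]
    have hfac : ∀ a, ∃ sa : (A⟦(1 : ℤ)⟧ : C) ⟶ X a, t' ≫ Pi.π Y a = sa ≫ u a := by
      intro a
      exact Triangle.coyoneda_exact₃ _ (hTa a) (t' ≫ Pi.π Y a) (ht'a a)
    choose s hs using hfac
    have hst : Pi.lift s ≫ Limits.Pi.map u = t' := by
      apply Pi.hom_ext
      intro a
      rw [Category.assoc, Pi.map_π, ← Category.assoc, limit.lift_π]
      exact (hs a).symm ▸ (by simp)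
    have hzero : φ⟦(1 : ℤ)⟧' = 0 := by
      rw [ht', ← hst, Category.assoc, hz23, comp_zero]
    apply (shiftFunctor C (1 : ℤ)).map_injective
    rw [hzero, Functor.map_zero]
  -- any family of components lifts to a map to `G`
  have ex : ∀ {A : C} (f : ∀ a, A ⟶ F a), ∃ φ : A ⟶ G, ∀ a, φ ≫ p a = f a := by
    intro A f
    have hg : Pi.lift (fun a => f a ≫ w a) ≫ Limits.Pi.map u = 0 := by
      apply Pi.hom_ext
      intro a
      rw [Category.assoc, Pi.map_π, ← Category.assoc, limit.lift_π,
        zero_comp]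
      have hz := comp_distTriang_mor_zero₁₂ _ (hTa a)
      replace hz : w a ≫ u a = 0 := hz
      simp only [Fan.mk_pt, Fan.mk_π_app, Category.assoc]
      rw [hz, comp_zero]
    have hex0 : ∃ φ₀ : A ⟶ G, Pi.lift (fun a => f a ≫ w a) = φ₀ ≫ w' :=
      Triangle.coyoneda_exact₂ _ hT (Pi.lift (fun a => f a ≫ w a)) hg
    obtain ⟨φ₀, hφ₀⟩ := hex0
    have hd : ∀ a, ((φ₀ ≫ p a - f a) ≫ w a) = 0 := by
      intro a
      rw [Preadditive.sub_comp, Category.assoc, ← hp1 a, ← Category.assoc, ← hφ₀, limit.lift_π]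
      simp
    have hfac : ∀ a, ∃ ea : (A⟦(1 : ℤ)⟧ : C) ⟶ Y a,
        (φ₀ ≫ p a - f a)⟦(1 : ℤ)⟧' = ea ≫ δ a := by
      intro a
      exact Triangle.coyoneda_exact₁ _ (hTa a) ((φ₀ ≫ p a - f a)⟦(1 : ℤ)⟧')
        (((shiftFunctor C (1 : ℤ)).map_comp _ _).symm.trans
          ((congrArg (shiftFunctor C (1 : ℤ)).map (hd a)).trans (Functor.map_zero _ _ _)))
    choose e he using hfac
    refine ⟨φ₀ - (shiftFunctor C (1 : ℤ)).preimage (Pi.lift e ≫ δ'), fun a => ?_⟩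
    have hc : ((shiftFunctor C (1 : ℤ)).preimage (Pi.lift e ≫ δ') ≫ p a) = φ₀ ≫ p a - f a := by
      apply (shiftFunctor C (1 : ℤ)).map_injective
      rw [Functor.map_comp, Functor.map_preimage, Category.assoc, hp2 a, ← Category.assoc,
        limit.lift_π]
      simp only [Fan.mk_pt, Fan.mk_π_app]
      exact (he a).symm
    rw [Preadditive.sub_comp, hc]
    abel
  -- hence `G` is a product of the `F a`
  have hlim : IsLimit (Fan.mk G p) := by
    refine mkFanLimit _ (fun s => (ex s.proj).choose) (fun s j => (ex s.proj).choose_spec j)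
      (fun s mm hm => ?_)
    have hk := key ((show s.pt ⟶ G from mm) - (ex s.proj).choose) (fun a => by
      rw [Preadditive.sub_comp]
      have h1 : mm ≫ p a = s.proj a := hm a
      rw [h1, (ex s.proj).choose_spec a, sub_self])
    exact sub_eq_zero.mp hk
  have hFprod : HasProduct F := HasLimit.mk ⟨_, hlim⟩
  have hlim1 : IsLimit (Fan.mk (G⟦(1 : ℤ)⟧) (fun a => (p a)⟦(1 : ℤ)⟧') :
      Fan (fun a => (F a)⟦(1 : ℤ)⟧)) :=
    isLimitFanMkObjOfIsLimit (shiftFunctor C (1 : ℤ)) F p hlim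
  have hF1prod : HasProduct (fun a => (F a)⟦(1 : ℤ)⟧) := HasLimit.mk ⟨_, hlim1⟩
  have i1 : HasProduct (fun j => (Triangle.mk (w j) (u j) (δ j)).obj₁) := hFprod
  have i2 : HasProduct (fun j => (Triangle.mk (w j) (u j) (δ j)).obj₂) := ‹HasProduct X›
  have i3 : HasProduct (fun j => (Triangle.mk (w j) (u j) (δ j)).obj₃) := ‹HasProduct Y›
  have i4 : HasProduct (fun j => ((Triangle.mk (w j) (u j) (δ j)).obj₁)⟦(1 : ℤ)⟧) := hF1prod
  have hPT : productTriangle (fun a => Triangle.mk (w a) (u a) (δ a)) ∈ distTriang C :=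
    productTriangle_distinguished _ hTa
  -- identify `G` with `∏ F`
  have e : (Triangle.mk w' (Limits.Pi.map u) δ').rotate ≅
      (productTriangle (fun a => Triangle.mk (w a) (u a) (δ a))).rotate := by
    refine isoTriangleOfIso₁₂ _ _ (rot_of_distTriang _ hT) (rot_of_distTriang _ hPT)
      (Iso.refl _) (Iso.refl _) ?_
    dsimp
    exact (Category.comp_id _).trans (Category.id_comp _).symm
  have e3 : (G⟦(1 : ℤ)⟧ : C) ≅
      ((∏ᶜ (fun j => (Triangle.mk (w j) (u j) (δ j)).obj₁) : C)⟦(1 : ℤ)⟧ : C) :=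
    Triangle.π₃.mapIso e
  have eG : G ≅ (∏ᶜ F : C) := (shiftFunctor C (1 : ℤ)).preimageIso e3
  have hge : t.IsGE (∏ᶜ F : C) (m + 1) := by
    have h := hprod (m + d + 1) F hF
    rwa [show m + (d : ℤ) + 1 - d = m + 1 by ring] at h
  exact t.isGE_of_iso eG.symm (m + 1)
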